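/- Conversion of panel moment conditions to repeated cross sections moment conditions. Let (Ω, P) be a probability space carrying (Y_1,…,Y_T, Z, D), where Z = (X', W')' is an ℝ^K-valued random vector and D takes values in {0,1}, and let (Ω_M, P_M) be a probability space carrying (Y, Z_M, D_M, T_idx), where Z_M = (X_M', W_M')' ∈ ℝ^K, D_M ∈ {0,1}, and T_idx takes values in {1,…,T} with π_t := P_M(T_idx = t) > 0 for every t. Assume that for every t the law of (Y, Z_M, D_M) under the conditional measure P_M( · | T_idx = t ) equals the law of (Y_t, Z, D) under P. Write T_t := 1{T_idx = t}. Then for every t ≥ 3, every β_t ∈ ℝ^{K_X}, and every F_t ∈ ℝ (all products integrable), E_M[ (1−D_M)·Z_M·( (T_t/π_t)·Y − (T_1/π_1)·Y − X_M'β_t − F_t·( (T_2/π_2)·Y − (T_1/π_1)·Y ) ) ] = E[ (1−D)·Z·( Y_t − Y_1 − X'β_t − F_t·(Y_2 − Y_1) ) ]. In particular, if the panel moment condition on the right-hand side equals 0 ∈ ℝ^K, then so does the repeated cross sections moment condition on the left-hand side. -/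

import Mathlib

open MeasureTheory ProbabilityTheory

/-- Conversion of panel moment conditions to repeated cross
sections moment conditions. If for every `t` the law of `(Y, Z_M, D_M)` under
`P_M(·|T_idx = t)` equals the law of `(Y_t, Z, D)` under `P`, with
`π_t := P_M(T_idx = t) > 0`, then for every `t ≥ 3`, `β_t`, and `F_t`, the
repeated cross sections moment expression equals the panel moment expression;
in particular, if the latter vanishes so does the former. -/
theorem statement14
    {Ω Ω' : Type*} [MeasurableSpace Ω] [MeasurableSpace Ω']
    (μ : Measure Ω) [IsProbabilityMeasure μ]
    (ν : Measure Ω') [IsProbabilityMeasure ν]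
    (T KX KW : ℕ) (hT : 3 ≤ T)
    (Y : ℕ → Ω → ℝ) (Z : Ω → (Fin KX ⊕ Fin KW) → ℝ) (D : Ω → ℝ)
    (YM : Ω' → ℝ) (ZM : Ω' → (Fin KX ⊕ Fin KW) → ℝ) (DM : Ω' → ℝ)
    (Tidx : Ω' → ℕ)
    (hD : ∀ ω, D ω = 0 ∨ D ω = 1) (hDM : ∀ ω', DM ω' = 0 ∨ DM ω' = 1)
    (hTrange : ∀ ω', 1 ≤ Tidx ω' ∧ Tidx ω' ≤ T)
    (hmeasY : ∀ s, Measurable (Y s)) (hmeasZ : Measurable Z)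
    (hmeasD : Measurable D)
    (hmeasYM : Measurable YM) (hmeasZM : Measurable ZM)
    (hmeasDM : Measurable DM) (hmeasT : Measurable Tidx)
    (hπ : ∀ s, 1 ≤ s → s ≤ T → 0 < ν {ω' | Tidx ω' = s})
    (hlaw : ∀ s, 1 ≤ s → s ≤ T →
      Measure.map (fun ω' => (YM ω', ZM ω', DM ω')) (ν[|{ω' | Tidx ω' = s}])
        = Measure.map (fun ω => (Y s ω, Z ω, D ω)) μ)
    (t : ℕ) (ht : 3 ≤ t) (htT : t ≤ T) (β : Fin KX → ℝ) (Ft : ℝ)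
    (hintM : ∀ k, Integrable (fun ω' => (1 - DM ω') * ZM ω' k *
      ((if Tidx ω' = t then (1:ℝ) else 0) / (ν {ω' | Tidx ω' = t}).toReal * YM ω'
        - (if Tidx ω' = 1 then (1:ℝ) else 0) / (ν {ω' | Tidx ω' = 1}).toReal * YM ω'
        - (∑ j, ZM ω' (Sum.inl j) * β j)
        - Ft * ((if Tidx ω' = 2 then (1:ℝ) else 0) / (ν {ω' | Tidx ω' = 2}).toReal * YM ω'
            - (if Tidx ω' = 1 then (1:ℝ) else 0) / (ν {ω' | Tidx ω' = 1}).toReal * YM ω'))) ν)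
    (hintP : ∀ k, Integrable (fun ω => (1 - D ω) * Z ω k *
      (Y t ω - Y 1 ω - (∑ j, Z ω (Sum.inl j) * β j) - Ft * (Y 2 ω - Y 1 ω))) μ)
    (hintPY : ∀ s, 1 ≤ s → s ≤ T → ∀ k,
      Integrable (fun ω => (1 - D ω) * Z ω k * Y s ω) μ)
    (hintPZ : ∀ k j, Integrable (fun ω => (1 - D ω) * Z ω k * Z ω (Sum.inl j)) μ) :
    (∀ k, ∫ ω', (1 - DM ω') * ZM ω' k *
        ((if Tidx ω' = t then (1:ℝ) else 0) / (ν {ω' | Tidx ω' = t}).toReal * YM ω'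
          - (if Tidx ω' = 1 then (1:ℝ) else 0) / (ν {ω' | Tidx ω' = 1}).toReal * YM ω'
          - (∑ j, ZM ω' (Sum.inl j) * β j)
          - Ft * ((if Tidx ω' = 2 then (1:ℝ) else 0) / (ν {ω' | Tidx ω' = 2}).toReal * YM ω'
              - (if Tidx ω' = 1 then (1:ℝ) else 0) / (ν {ω' | Tidx ω' = 1}).toReal * YM ω')) ∂ν
      = ∫ ω, (1 - D ω) * Z ω k *
          (Y t ω - Y 1 ω - (∑ j, Z ω (Sum.inl j) * β j) - Ft * (Y 2 ω - Y 1 ω)) ∂μ) ∧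
    ((∀ k, ∫ ω, (1 - D ω) * Z ω k *
        (Y t ω - Y 1 ω - (∑ j, Z ω (Sum.inl j) * β j) - Ft * (Y 2 ω - Y 1 ω)) ∂μ = 0) →
      ∀ k, ∫ ω', (1 - DM ω') * ZM ω' k *
        ((if Tidx ω' = t then (1:ℝ) else 0) / (ν {ω' | Tidx ω' = t}).toReal * YM ω'
          - (if Tidx ω' = 1 then (1:ℝ) else 0) / (ν {ω' | Tidx ω' = 1}).toReal * YM ω'
          - (∑ j, ZM ω' (Sum.inl j) * β j)
          - Ft * ((if Tidx ω' = 2 then (1:ℝ) else 0) / (ν {ω' | Tidx ω' = 2}).toReal * YM ω'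
              - (if Tidx ω' = 1 then (1:ℝ) else 0) / (ν {ω' | Tidx ω' = 1}).toReal * YM ω')) ∂ν = 0) := by
  classical
  have hνfin : ∀ (s : Set Ω'), ν s ≠ ⊤ := fun s => (measure_lt_top ν s).ne
  have h1T : 1 ≤ T := by omega
  have h2T : 2 ≤ T := by omega
  have h1t : 1 ≤ t := by omega
  -- positivity of the (real) probabilities
  have hπpos : ∀ s, 1 ≤ s → s ≤ T → 0 < (ν {ω' | Tidx ω' = s}).toReal := fun s h1 h2 =>
    ENNReal.toReal_pos (hπ s h1 h2).ne' (hνfin _)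
  have hdisj : ∀ {s r : ℕ}, s ≠ r →
      Disjoint {ω' | Tidx ω' = s} {ω' | Tidx ω' = r} := by
    intro s r hsr
    refine Set.disjoint_left.mpr fun ω' hs hr => hsr ?_
    simp only [Set.mem_setOf_eq] at hs hr
    rw [← hs, hr]
  have hAmeas : ∀ s : ℕ, MeasurableSet {ω' | Tidx ω' = s} := fun s =>
    hmeasT (measurableSet_singleton s)
  have hUnion : (⋃ s ∈ Finset.Icc 1 T, {ω' | Tidx ω' = s}) = Set.univ := by
    ext ω'
    simp only [Set.mem_iUnion, Finset.mem_Icc, Set.mem_setOf_eq, Set.mem_univ, iff_true]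
    exact ⟨Tidx ω', ⟨(hTrange ω').1, (hTrange ω').2⟩, rfl⟩
  have key : ∀ k, ∫ ω', (1 - DM ω') * ZM ω' k *
        ((if Tidx ω' = t then (1:ℝ) else 0) / (ν {ω' | Tidx ω' = t}).toReal * YM ω'
          - (if Tidx ω' = 1 then (1:ℝ) else 0) / (ν {ω' | Tidx ω' = 1}).toReal * YM ω'
          - (∑ j, ZM ω' (Sum.inl j) * β j)
          - Ft * ((if Tidx ω' = 2 then (1:ℝ) else 0) / (ν {ω' | Tidx ω' = 2}).toReal * YM ω'
              - (if Tidx ω' = 1 then (1:ℝ) else 0) / (ν {ω' | Tidx ω' = 1}).toReal * YM ω')) ∂ν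
      = ∫ ω, (1 - D ω) * Z ω k *
          (Y t ω - Y 1 ω - (∑ j, Z ω (Sum.inl j) * β j) - Ft * (Y 2 ω - Y 1 ω)) ∂μ := by
    intro k
    -- coefficient function
    set c : ℕ → ℝ := fun s =>
      (if s = t then (1:ℝ) else 0) / (ν {ω' | Tidx ω' = t}).toReal
        - (if s = 1 then (1:ℝ) else 0) / (ν {ω' | Tidx ω' = 1}).toReal
        - Ft * ((if s = 2 then (1:ℝ) else 0) / (ν {ω' | Tidx ω' = 2}).toReal
            - (if s = 1 then (1:ℝ) else 0) / (ν {ω' | Tidx ω' = 1}).toReal) with hcdef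
    -- integrability of the covariate term on the panel side
    have hJzInt : Integrable (fun ω => (1 - D ω) * Z ω k *
        (∑ j, Z ω (Sum.inl j) * β j)) μ := by
      have heq : (fun ω => (1 - D ω) * Z ω k * (∑ j, Z ω (Sum.inl j) * β j))
          = fun ω => ∑ j, ((1 - D ω) * Z ω k * Z ω (Sum.inl j)) * β j := by
        funext ω
        rw [Finset.mul_sum]
        exact Finset.sum_congr rfl fun j _ => by ring
      rw [heq]
      exact integrable_finset_sum _ fun j _ => (hintPZ k j).mul_const (β j)
    -- section-by-section computation
    have hsec : ∀ s, 1 ≤ s → s ≤ T →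
        ∫ ω' in {ω' | Tidx ω' = s}, (1 - DM ω') * ZM ω' k *
          ((if Tidx ω' = t then (1:ℝ) else 0) / (ν {ω' | Tidx ω' = t}).toReal * YM ω'
            - (if Tidx ω' = 1 then (1:ℝ) else 0) / (ν {ω' | Tidx ω' = 1}).toReal * YM ω'
            - (∑ j, ZM ω' (Sum.inl j) * β j)
            - Ft * ((if Tidx ω' = 2 then (1:ℝ) else 0) / (ν {ω' | Tidx ω' = 2}).toReal * YM ω'
                - (if Tidx ω' = 1 then (1:ℝ) else 0) / (ν {ω' | Tidx ω' = 1}).toReal * YM ω')) ∂ν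
        = (ν {ω' | Tidx ω' = s}).toReal *
            (c s * (∫ ω, (1 - D ω) * Z ω k * Y s ω ∂μ)
              - ∫ ω, (1 - D ω) * Z ω k * (∑ j, Z ω (Sum.inl j) * β j) ∂μ) := by
      intro s hs1 hsT
      have hν0 : ν {ω' | Tidx ω' = s} ≠ 0 := (hπ s hs1 hsT).ne'
      have hπsne : (ν {ω' | Tidx ω' = s}).toReal ≠ 0 := (hπpos s hs1 hsT).ne'
      -- the target measurable function on the sample space
      have hGmeas : Measurable (fun p : ℝ × ((Fin KX ⊕ Fin KW) → ℝ) × ℝ =>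
          (1 - p.2.2) * p.2.1 k * (c s * p.1 - ∑ j, p.2.1 (Sum.inl j) * β j)) := by
        apply Measurable.mul
        · exact ((measurable_const.sub (measurable_snd.comp measurable_snd)).mul
            ((measurable_pi_apply k).comp (measurable_fst.comp measurable_snd)))
        · exact (measurable_fst.const_mul (c s)).sub
            (Finset.measurable_sum _ fun j _ => by fun_prop)
      have step1 : ∫ ω' in {ω' | Tidx ω' = s}, (1 - DM ω') * ZM ω' k *
          ((if Tidx ω' = t then (1:ℝ) else 0) / (ν {ω' | Tidx ω' = t}).toReal * YM ω'
            - (if Tidx ω' = 1 then (1:ℝ) else 0) / (ν {ω' | Tidx ω' = 1}).toReal * YM ω'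
            - (∑ j, ZM ω' (Sum.inl j) * β j)
            - Ft * ((if Tidx ω' = 2 then (1:ℝ) else 0) / (ν {ω' | Tidx ω' = 2}).toReal * YM ω'
                - (if Tidx ω' = 1 then (1:ℝ) else 0) / (ν {ω' | Tidx ω' = 1}).toReal * YM ω')) ∂ν
          = ∫ ω' in {ω' | Tidx ω' = s}, (1 - DM ω') * ZM ω' k *
              (c s * YM ω' - ∑ j, ZM ω' (Sum.inl j) * β j) ∂ν := by
        apply setIntegral_congr_fun (hAmeas s)
        intro ω' hω'
        have hTs : Tidx ω' = s := hω'
        simp only [hTs, hcdef]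
        ring
      have step2 : ∫ ω' in {ω' | Tidx ω' = s}, (1 - DM ω') * ZM ω' k *
            (c s * YM ω' - ∑ j, ZM ω' (Sum.inl j) * β j) ∂ν
          = (ν {ω' | Tidx ω' = s}).toReal *
            ∫ ω', (1 - DM ω') * ZM ω' k *
              (c s * YM ω' - ∑ j, ZM ω' (Sum.inl j) * β j) ∂(ν[|{ω' | Tidx ω' = s}]) := by
        rw [ProbabilityTheory.cond, integral_smul_measure, ENNReal.toReal_inv, smul_eq_mul,
          ← mul_assoc, mul_inv_cancel₀ hπsne, one_mul]
      have step3 : ∫ ω', (1 - DM ω') * ZM ω' k *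
            (c s * YM ω' - ∑ j, ZM ω' (Sum.inl j) * β j) ∂(ν[|{ω' | Tidx ω' = s}])
          = ∫ ω, (1 - D ω) * Z ω k * (c s * Y s ω - ∑ j, Z ω (Sum.inl j) * β j) ∂μ := by
        have hmapM : AEMeasurable (fun ω' => (YM ω', ZM ω', DM ω'))
            (ν[|{ω' | Tidx ω' = s}]) :=
          (hmeasYM.prodMk (hmeasZM.prodMk hmeasDM)).aemeasurable
        have hmapP : AEMeasurable (fun ω => (Y s ω, Z ω, D ω)) μ :=
          ((hmeasY s).prodMk (hmeasZ.prodMk hmeasD)).aemeasurable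
        have e1 := integral_map (f := fun p : ℝ × ((Fin KX ⊕ Fin KW) → ℝ) × ℝ =>
            (1 - p.2.2) * p.2.1 k * (c s * p.1 - ∑ j, p.2.1 (Sum.inl j) * β j))
          hmapM hGmeas.aestronglyMeasurable
        have e2 := integral_map (f := fun p : ℝ × ((Fin KX ⊕ Fin KW) → ℝ) × ℝ =>
            (1 - p.2.2) * p.2.1 k * (c s * p.1 - ∑ j, p.2.1 (Sum.inl j) * β j))
          hmapP hGmeas.aestronglyMeasurable
        rw [← e1, hlaw s hs1 hsT, e2]
      have step4 : ∫ ω, (1 - D ω) * Z ω k *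
            (c s * Y s ω - ∑ j, Z ω (Sum.inl j) * β j) ∂μ
          = c s * (∫ ω, (1 - D ω) * Z ω k * Y s ω ∂μ)
            - ∫ ω, (1 - D ω) * Z ω k * (∑ j, Z ω (Sum.inl j) * β j) ∂μ := by
        have heq : (fun ω => (1 - D ω) * Z ω k * (c s * Y s ω - ∑ j, Z ω (Sum.inl j) * β j))
            = fun ω => c s * ((1 - D ω) * Z ω k * Y s ω)
              - (1 - D ω) * Z ω k * (∑ j, Z ω (Sum.inl j) * β j) := by
          funext ω; ring
        rw [heq, integral_sub ((hintPY s hs1 hsT k).const_mul (c s)) hJzInt,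
          integral_const_mul]
      rw [step1, step2, step3, step4]
    -- split the mixture integral over the sections
    have hsplit : ∫ ω', (1 - DM ω') * ZM ω' k *
          ((if Tidx ω' = t then (1:ℝ) else 0) / (ν {ω' | Tidx ω' = t}).toReal * YM ω'
            - (if Tidx ω' = 1 then (1:ℝ) else 0) / (ν {ω' | Tidx ω' = 1}).toReal * YM ω'
            - (∑ j, ZM ω' (Sum.inl j) * β j)
            - Ft * ((if Tidx ω' = 2 then (1:ℝ) else 0) / (ν {ω' | Tidx ω' = 2}).toReal * YM ω'
                - (if Tidx ω' = 1 then (1:ℝ) else 0) / (ν {ω' | Tidx ω' = 1}).toReal * YM ω')) ∂ν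
        = ∑ s ∈ Finset.Icc 1 T, ∫ ω' in {ω' | Tidx ω' = s}, (1 - DM ω') * ZM ω' k *
          ((if Tidx ω' = t then (1:ℝ) else 0) / (ν {ω' | Tidx ω' = t}).toReal * YM ω'
            - (if Tidx ω' = 1 then (1:ℝ) else 0) / (ν {ω' | Tidx ω' = 1}).toReal * YM ω'
            - (∑ j, ZM ω' (Sum.inl j) * β j)
            - Ft * ((if Tidx ω' = 2 then (1:ℝ) else 0) / (ν {ω' | Tidx ω' = 2}).toReal * YM ω'
                - (if Tidx ω' = 1 then (1:ℝ) else 0) / (ν {ω' | Tidx ω' = 1}).toReal * YM ω')) ∂ν := by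
      rw [← setIntegral_univ, ← hUnion]
      exact integral_biUnion_finset _ (fun i _ => hAmeas i)
        (fun i _ j _ hij => hdisj hij) (fun i _ => (hintM k).integrableOn)
    -- total mass one
    have hsum1 : ∑ s ∈ Finset.Icc 1 T, (ν {ω' | Tidx ω' = s}).toReal = 1 := by
      have hm : ν (⋃ s ∈ Finset.Icc 1 T, {ω' | Tidx ω' = s})
          = ∑ s ∈ Finset.Icc 1 T, ν {ω' | Tidx ω' = s} :=
        measure_biUnion_finset (fun i _ j _ hij => hdisj hij) (fun i _ => hAmeas i)
      rw [hUnion, measure_univ] at hm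
      rw [← ENNReal.toReal_sum (fun a _ => hνfin _), ← hm, ENNReal.toReal_one]
    -- abbreviations for the panel integrals
    set Jy : ℕ → ℝ := fun s => ∫ ω, (1 - D ω) * Z ω k * Y s ω ∂μ with hJy
    set Jz : ℝ := ∫ ω, (1 - D ω) * Z ω k * (∑ j, Z ω (Sum.inl j) * β j) ∂μ with hJz
    -- per-term simplification of the sum
    have hterm : ∀ s ∈ Finset.Icc 1 T,
        (ν {ω' | Tidx ω' = s}).toReal * (c s * Jy s - Jz)
          = ((if s = t then Jy t else 0) - (1 - Ft) * (if s = 1 then Jy 1 else 0)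
              - Ft * (if s = 2 then Jy 2 else 0))
            - (ν {ω' | Tidx ω' = s}).toReal * Jz := by
      intro s hs
      have hπ1 : (ν {ω' | Tidx ω' = 1}).toReal ≠ 0 := (hπpos 1 le_rfl h1T).ne'
      have hπ2 : (ν {ω' | Tidx ω' = 2}).toReal ≠ 0 := (hπpos 2 (by omega) h2T).ne'
      have hπt : (ν {ω' | Tidx ω' = t}).toReal ≠ 0 := (hπpos t h1t htT).ne'
      by_cases hst : s = t
      · subst hst
        have h1 : s ≠ 1 := by omega
        have h2 : s ≠ 2 := by omega
        simp only [hcdef, if_pos rfl, if_neg h1, if_neg h2, if_true]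
        field_simp
        ring
      · by_cases hs1 : s = 1
        · subst hs1
          have h2 : (1:ℕ) ≠ 2 := by omega
          have htne : (1:ℕ) ≠ t := by omega
          simp only [hcdef, if_pos rfl, if_neg h2, if_neg htne, if_neg hst, if_true]
          field_simp
          ring
        · by_cases hs2 : s = 2
          · subst hs2
            have h1 : (2:ℕ) ≠ 1 := by omega
            simp only [hcdef, if_pos rfl, if_neg h1, if_neg hst, if_true]
            field_simp
            ring
          · simp only [hcdef, if_neg hst, if_neg hs1, if_neg hs2]
            ring
    rw [hsplit, Finset.sum_congr rfl (fun s hs => (hsec s (Finset.mem_Icc.mp hs).1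
      (Finset.mem_Icc.mp hs).2)), Finset.sum_congr rfl hterm]
    rw [Finset.sum_sub_distrib, ← Finset.sum_mul, hsum1, one_mul,
      Finset.sum_sub_distrib, Finset.sum_sub_distrib, ← Finset.mul_sum, ← Finset.mul_sum,
      Finset.sum_ite_eq' (Finset.Icc 1 T) t (fun _ => Jy t),
      Finset.sum_ite_eq' (Finset.Icc 1 T) 1 (fun _ => Jy 1),
      Finset.sum_ite_eq' (Finset.Icc 1 T) 2 (fun _ => Jy 2),
      if_pos (Finset.mem_Icc.mpr ⟨h1t, htT⟩), if_pos (Finset.mem_Icc.mpr ⟨le_rfl, h1T⟩),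
      if_pos (Finset.mem_Icc.mpr ⟨by omega, h2T⟩)]
    -- expand the panel side
    have hRHS : ∫ ω, (1 - D ω) * Z ω k *
          (Y t ω - Y 1 ω - (∑ j, Z ω (Sum.inl j) * β j) - Ft * (Y 2 ω - Y 1 ω)) ∂μ
        = (Jy t - Jy 1 - Jz) - (Ft * Jy 2 - Ft * Jy 1) := by
      have heq : (fun ω => (1 - D ω) * Z ω k *
            (Y t ω - Y 1 ω - (∑ j, Z ω (Sum.inl j) * β j) - Ft * (Y 2 ω - Y 1 ω)))
          = fun ω => (((1 - D ω) * Z ω k * Y t ω) - ((1 - D ω) * Z ω k * Y 1 ω)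
              - ((1 - D ω) * Z ω k * (∑ j, Z ω (Sum.inl j) * β j)))
            - (Ft * ((1 - D ω) * Z ω k * Y 2 ω) - Ft * ((1 - D ω) * Z ω k * Y 1 ω)) := by
        funext ω; ring
      have it := hintPY t h1t htT k
      have i1 := hintPY 1 le_rfl h1T k
      have i2 := hintPY 2 (by omega) h2T k
      have ia : Integrable (fun ω => (1 - D ω) * Z ω k * Y t ω
          - (1 - D ω) * Z ω k * Y 1 ω) μ := it.sub i1
      have ib : Integrable (fun ω => ((1 - D ω) * Z ω k * Y t ω
          - (1 - D ω) * Z ω k * Y 1 ω)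
          - (1 - D ω) * Z ω k * (∑ j, Z ω (Sum.inl j) * β j)) μ := ia.sub hJzInt
      have ic : Integrable (fun ω => Ft * ((1 - D ω) * Z ω k * Y 2 ω)
          - Ft * ((1 - D ω) * Z ω k * Y 1 ω)) μ :=
        (i2.const_mul Ft).sub (i1.const_mul Ft)
      rw [heq, integral_sub ib ic, integral_sub ia hJzInt, integral_sub it i1,
        integral_sub (i2.const_mul Ft) (i1.const_mul Ft),
        integral_const_mul, integral_const_mul]
    rw [hRHS]
    ring
  refine ⟨key, fun h0 k => ?_⟩
  rw [key k]
  exact h0 k
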